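/- Let X be a compactum, let c be a possibility capacity on X, and let φ ∈ C(X). Then, computed in ℝ ∪ {-∞} with ln(0) = -∞, the supremum over x ∈ X of φ(x) + ln(c({x})) equals the supremum over t ∈ ℝ of ln(c(φ_t)) + t, and both suprema are attained. -/

import Mathlib

/-- An (upper-semicontinuous) capacity on a compactum `X`: a `[0,1]`-valued,
monotone, normalized set function on closed sets, upper semicontinuous in the
sense that if `ν(F) < a` then there is an open `O ⊇ F` with `ν(B) < a` for every
closed `B ⊆ O`. -/
def IsCapacity {X : Type*} [TopologicalSpace X] (ν : Set X → ℝ) : Prop :=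
  ν Set.univ = 1 ∧ ν ∅ = 0 ∧
  (∀ F : Set X, IsClosed F → 0 ≤ ν F ∧ ν F ≤ 1) ∧
  (∀ F G : Set X, IsClosed F → IsClosed G → F ⊆ G → ν F ≤ ν G) ∧
  (∀ (F : Set X) (a : ℝ), IsClosed F → ν F < a →
    ∃ O : Set X, IsOpen O ∧ F ⊆ O ∧ ∀ B : Set X, IsClosed B → B ⊆ O → ν B < a)

/-- A possibility capacity: a capacity with `ν(A ∪ B) = max(ν(A), ν(B))`
for all closed `A`, `B`. -/
def IsPossibilityCapacity {X : Type*} [TopologicalSpace X] (ν : Set X → ℝ) : Prop :=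
  IsCapacity ν ∧
  ∀ A B : Set X, IsClosed A → IsClosed B → ν (A ∪ B) = max (ν A) (ν B)
open Classical in
/-- The exponential `[-∞,0] → [0,1]`, with `exp(-∞) = 0`. -/
noncomputable def myExp (a : EReal) : ℝ :=
  if a = ⊥ then 0 else Real.exp a.toReal

open Classical in
/-- The logarithm `[0,1] → [-∞,0]`, with `ln(0) = -∞`. -/
noncomputable def myLog (r : ℝ) : EReal :=
  if r ≤ 0 then ⊥ else (Real.log r : EReal)

lemma myLog_mono : Monotone myLog := by
  intro r s h
  unfold myLog
  split_ifs with h1 h2 h2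
  · exact le_rfl
  · exact bot_le
  · linarith
  · exact_mod_cast Real.log_le_log (by linarith) h

lemma myLog_lt_coe_iff (q r : ℝ) : myLog r < (q : EReal) ↔ r < Real.exp q := by
  unfold myLog
  split_ifs with h1
  · simp only [bot_lt_iff_ne_bot, ne_eq, EReal.coe_ne_bot, not_false_iff, true_iff]
    exact lt_of_le_of_lt h1 (Real.exp_pos q)
  · rw [EReal.coe_lt_coe_iff]
    exact Real.log_lt_iff_lt_exp (by linarith)

lemma myLog_le_coe_iff (q r : ℝ) : myLog r ≤ (q : EReal) ↔ r ≤ Real.exp q := by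
  unfold myLog
  split_ifs with h1
  · simp only [bot_le, true_iff]
    exact le_trans h1 (Real.exp_pos q).le
  · rw [EReal.coe_le_coe_iff]
    exact Real.log_le_iff_le_exp (by linarith)

lemma myLog_nonpos {r : ℝ} (h : r ≤ 1) : myLog r ≤ 0 := by
  have := (myLog_le_coe_iff 0 r).mpr (by simpa using h)
  simpa using this

lemma myLog_eq_bot_iff (r : ℝ) : myLog r = ⊥ ↔ r ≤ 0 := by
  unfold myLog
  split_ifs with h1 <;> simp [h1]

section Aux

variable {X : Type*} [TopologicalSpace X]

lemma stmt15_biUnion_lt {c : Set X → ℝ} (hc : IsPossibilityCapacity c) {ι : Type*}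
    (s : Finset ι) (F : ι → Set X) (hF : ∀ i, IsClosed (F i)) (a : ℝ) (ha : 0 < a)
    (h : ∀ i ∈ s, c (F i) < a) : c (⋃ i ∈ s, F i) < a := by
  classical
  induction s using Finset.induction with
  | empty => simpa [hc.1.2.1] using ha
  | @insert j s hj ih =>
      rw [Finset.set_biUnion_insert, hc.2 (F j) (⋃ x ∈ s, F x) (hF j)
        (s.finite_toSet.isClosed_biUnion (fun i _ => hF i))]
      exact max_lt (h j (Finset.mem_insert_self j s))
        (ih (fun i hi => h i (Finset.mem_insert_of_mem hi)))

/-- Key lemma: a possibility capacity is controlled by its values on singletons. -/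
lemma stmt15_key [CompactSpace X] [T2Space X] {c : Set X → ℝ} (hc : IsPossibilityCapacity c)
    {F : Set X} (hF : IsClosed F) {a : ℝ} (ha : 0 < a)
    (h : ∀ x ∈ F, c {x} < a) : c F < a := by
  classical
  have hO : ∀ x : F, ∃ O : Set X, IsOpen O ∧ ({(x : X)} : Set X) ⊆ O ∧
      ∀ B : Set X, IsClosed B → B ⊆ O → c B < a := fun x =>
    hc.1.2.2.2.2 {(x : X)} a isClosed_singleton (h x x.2)
  choose O hOopen hOmem hOprop using hO
  have hcover : F ⊆ ⋃ x : F, O x := fun y hy =>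
    Set.mem_iUnion.mpr ⟨⟨y, hy⟩, hOmem ⟨y, hy⟩ rfl⟩
  obtain ⟨t, ht⟩ := (hF.isCompact).elim_finite_subcover O hOopen hcover
  set u : F → Set X := fun i => if i ∈ t then O i else ∅ with hu_def
  have huo : ∀ i, IsOpen (u i) := by
    intro i; by_cases hi : i ∈ t <;> simp [hu_def, hi, hOopen, isOpen_empty]
  have huf : ∀ x ∈ F, { i : F | x ∈ u i }.Finite := by
    intro x _
    apply Set.Finite.subset t.finite_toSet
    intro i hi
    by_cases h' : i ∈ t
    · exact h'
    · simp [hu_def, h'] at hi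
  have hus : F ⊆ ⋃ i, u i := by
    intro y hy
    obtain ⟨i, hi, hyi⟩ := Set.mem_iUnion₂.mp (ht hy)
    exact Set.mem_iUnion.mpr ⟨i, by simp [hu_def, hi, hyi]⟩
  obtain ⟨v, hsv, hvo, hvc⟩ := exists_subset_iUnion_closure_subset hF huo huf hus
  have hFeq : F = ⋃ i ∈ t, (F ∩ closure (v i)) := by
    apply Set.Subset.antisymm
    · intro y hy
      obtain ⟨i, hyi⟩ := Set.mem_iUnion.mp (hsv hy)
      have hit : i ∈ t := by
        by_contra h'
        have : closure (v i) ⊆ (∅ : Set X) := by simpa [hu_def, h'] using hvc i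
        exact this (subset_closure hyi)
      exact Set.mem_iUnion₂.mpr ⟨i, hit, hy, subset_closure hyi⟩
    · intro y hy
      obtain ⟨i, _, hyi⟩ := Set.mem_iUnion₂.mp hy
      exact hyi.1
  rw [hFeq]
  apply stmt15_biUnion_lt hc t _ (fun i => hF.inter isClosed_closure) a ha
  intro i hi
  apply hOprop i _ (hF.inter isClosed_closure)
  calc F ∩ closure (v i) ⊆ closure (v i) := Set.inter_subset_right
    _ ⊆ u i := hvc i
    _ = O i := by simp [hu_def, hi]

lemma stmt15_superlevel_closed [T2Space X] {c : Set X → ℝ} (hc : IsPossibilityCapacity c)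
    (φ : C(X, ℝ)) (a : ℝ) :
    IsClosed {x : X | (a : EReal) ≤ (φ x : EReal) + myLog (c {x})} := by
  rw [← isOpen_compl_iff, isOpen_iff_mem_nhds]
  intro x hx
  simp only [Set.mem_compl_iff, Set.mem_setOf_eq, not_le] at hx
  have hL : myLog (c {x}) < ((a - φ x : ℝ) : EReal) := by
    by_contra h'
    push_neg at h'
    have h2 : (φ x : EReal) + ((a - φ x : ℝ) : EReal) ≤ (φ x : EReal) + myLog (c {x}) :=
      add_le_add_right h' _
    rw [← EReal.coe_add] at h2
    have : ((a : ℝ) : EReal) ≤ (φ x : EReal) + myLog (c {x}) := by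
      convert h2 using 2; ring
    exact absurd hx (not_lt.mpr this)
  obtain ⟨q, hq1, hq2⟩ := EReal.exists_between_coe_real hL
  have hcx : c {x} < Real.exp q := (myLog_lt_coe_iff q (c {x})).mp hq1
  obtain ⟨O, hOopen, hOx, hOprop⟩ := hc.1.2.2.2.2 {x} (Real.exp q) isClosed_singleton hcx
  have hφx : φ x < a - q := by
    have := EReal.coe_lt_coe_iff.mp hq2; linarith
  refine mem_nhds_iff.mpr ⟨O ∩ φ ⁻¹' Set.Iio (a - q), ?_, hOopen.inter
    ((isOpen_Iio).preimage φ.continuous), ⟨hOx rfl, hφx⟩⟩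
  intro y hy
  simp only [Set.mem_compl_iff, Set.mem_setOf_eq, not_le]
  have hcy : c {y} < Real.exp q :=
    hOprop {y} isClosed_singleton (Set.singleton_subset_iff.mpr hy.1)
  have h1 : myLog (c {y}) < (q : EReal) := (myLog_lt_coe_iff q (c {y})).mpr hcy
  have h2 : (φ y : EReal) < ((a - q : ℝ) : EReal) := EReal.coe_lt_coe_iff.mpr hy.2
  calc (φ y : EReal) + myLog (c {y}) < ((a - q : ℝ) : EReal) + (q : EReal) :=
        EReal.add_lt_add h2 h1
    _ = (a : EReal) := by rw [← EReal.coe_add]; norm_num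

lemma stmt15_attained [CompactSpace X] [T2Space X] {c : Set X → ℝ}
    (hc : IsPossibilityCapacity c) (φ : C(X, ℝ)) :
    (∃ x₀ : X, (⨆ x : X, ((φ x : EReal) + myLog (c {x}))) =
      (φ x₀ : EReal) + myLog (c {x₀})) ∧
    (⨆ x : X, ((φ x : EReal) + myLog (c {x}))) ≠ ⊥ ∧
    (⨆ x : X, ((φ x : EReal) + myLog (c {x}))) ≠ ⊤ := by
  classical
  haveI hX : Nonempty X := by
    by_contra h
    rw [not_nonempty_iff] at h
    have h0 : (Set.univ : Set X) = ∅ := Set.univ_eq_empty_iff.mpr h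
    have h1 : (1 : ℝ) = 0 := by rw [← hc.1.1, h0, hc.1.2.1]
    norm_num at h1
  set f : X → EReal := fun x => (φ x : EReal) + myLog (c {x}) with hf
  set M := ⨆ x, f x with hM
  obtain ⟨z, -, hz⟩ := isCompact_univ.exists_isMaxOn Set.univ_nonempty φ.continuous.continuousOn
  have hMle : M ≤ (φ z : EReal) := by
    apply iSup_le
    intro x
    calc f x ≤ (φ x : EReal) + 0 :=
          add_le_add_right (myLog_nonpos (hc.1.2.2.1 _ isClosed_singleton).2) _
      _ = (φ x : EReal) := add_zero _
      _ ≤ (φ z : EReal) := EReal.coe_le_coe_iff.mpr (hz (Set.mem_univ x))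
  have hMbot : M ≠ ⊥ := by
    intro h
    have hkey : c Set.univ < 1 := by
      apply stmt15_key hc isClosed_univ one_pos
      intro x _
      have hfx : f x = ⊥ := le_bot_iff.mp (h ▸ le_iSup f x)
      have hLbot : myLog (c {x}) = ⊥ := by
        rcases EReal.add_eq_bot_iff.mp hfx with h' | h'
        · exact absurd h' (EReal.coe_ne_bot _)
        · exact h'
      have := (myLog_eq_bot_iff _).mp hLbot
      linarith
    rw [hc.1.1] at hkey
    norm_num at hkey
  have hMtop : M ≠ ⊤ := ne_top_of_le_ne_top (EReal.coe_ne_top _) hMle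
  set m := M.toReal with hm
  have hMm : M = (m : EReal) := (EReal.coe_toReal hMtop hMbot).symm
  set K : {a : ℝ // (a : EReal) < M} → Set X := fun a => {x | (a.1 : EReal) ≤ f x} with hK
  have hKclosed : ∀ a, IsClosed (K a) := fun a => stmt15_superlevel_closed hc φ a.1
  have hKne : ∀ a, (K a).Nonempty := by
    intro a
    obtain ⟨x, hx⟩ := lt_iSup_iff.mp a.2
    exact ⟨x, hx.le⟩
  have hmono : ∀ (a b : {a : ℝ // (a : EReal) < M}), a.1 ≤ b.1 → K b ⊆ K a := by
    intro a b hab x hx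
    exact le_trans (EReal.coe_le_coe_iff.mpr hab) hx
  have hdir : Directed (· ⊇ ·) K := by
    intro a b
    rcases le_total a.1 b.1 with h | h
    · exact ⟨b, hmono a b h, subset_rfl⟩
    · exact ⟨a, subset_rfl, hmono b a h⟩
  have hNE : Nonempty {a : ℝ // (a : EReal) < M} := by
    refine ⟨⟨m - 1, ?_⟩⟩
    rw [hMm]
    exact_mod_cast sub_one_lt m
  obtain ⟨x₀, hx₀⟩ := IsCompact.nonempty_iInter_of_directed_nonempty_isCompact_isClosed
    K hdir hKne (fun a => (hKclosed a).isCompact) hKclosed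
  refine ⟨⟨x₀, le_antisymm ?_ (le_iSup f x₀)⟩, hMbot, hMtop⟩
  by_contra h
  push_neg at h
  obtain ⟨q, hq1, hq2⟩ := EReal.exists_between_coe_real h
  have hx₀q : x₀ ∈ K ⟨q, hq2⟩ := Set.mem_iInter.mp hx₀ ⟨q, hq2⟩
  exact absurd (lt_of_le_of_lt hx₀q hq1) (lt_irrefl _)

end Aux

/-- Let `X` be a compactum, `c` a possibility capacity on `X`, and
`φ ∈ C(X)`.  Then, computed in `ℝ ∪ {-∞}` with `ln(0) = -∞`,
`sup_{x ∈ X} (φ(x) + ln c({x})) = sup_{t ∈ ℝ} (ln c(φ_t) + t)`, where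
`φ_t = {x : φ(x) ≥ t}`, and both suprema are attained. -/
theorem stmt15 {X : Type*} [TopologicalSpace X] [CompactSpace X] [T2Space X]
    (c : Set X → ℝ) (hc : IsPossibilityCapacity c) (φ : C(X, ℝ)) :
    (⨆ x : X, ((φ x : EReal) + myLog (c {x}))) =
      (⨆ t : ℝ, (myLog (c {y | t ≤ φ y}) + (t : EReal))) ∧
    (∃ x₀ : X, (⨆ x : X, ((φ x : EReal) + myLog (c {x}))) =
        (φ x₀ : EReal) + myLog (c {x₀})) ∧
    (∃ t₀ : ℝ, (⨆ t : ℝ, (myLog (c {y | t ≤ φ y}) + (t : EReal))) =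
        myLog (c {y | t₀ ≤ φ y}) + (t₀ : EReal)) := by
  classical
  set f : X → EReal := fun x => (φ x : EReal) + myLog (c {x}) with hf
  set g : ℝ → EReal := fun t => myLog (c {y | t ≤ φ y}) + (t : EReal) with hg
  set M := ⨆ x, f x with hM
  obtain ⟨⟨x₀, hx₀⟩, hMbot, hMtop⟩ := stmt15_attained hc φ
  set m := M.toReal with hm
  have hMm : M = (m : EReal) := (EReal.coe_toReal hMtop hMbot).symm
  have hFt_closed : ∀ t : ℝ, IsClosed {y : X | t ≤ φ y} := fun t =>
    isClosed_le continuous_const φ.continuous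
  -- each x: f x ≤ g (φ x)
  have hfg : ∀ x : X, f x ≤ g (φ x) := by
    intro x
    have hsub : ({x} : Set X) ⊆ {y : X | φ x ≤ φ y} := by
      rw [Set.singleton_subset_iff]; show φ x ≤ φ x; exact le_rfl
    have hcc : c {x} ≤ c {y : X | φ x ≤ φ y} :=
      hc.1.2.2.2.1 _ _ isClosed_singleton (hFt_closed (φ x)) hsub
    calc f x = myLog (c {x}) + (φ x : EReal) := add_comm _ _
      _ ≤ myLog (c {y : X | φ x ≤ φ y}) + (φ x : EReal) :=
          add_le_add_left (myLog_mono hcc) _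
      _ = g (φ x) := rfl
  -- each t: g t ≤ M
  have hgM : ∀ t : ℝ, g t ≤ M := by
    intro t
    by_cases hzero : c {y : X | t ≤ φ y} ≤ 0
    · have : myLog (c {y : X | t ≤ φ y}) = ⊥ := (myLog_eq_bot_iff _).mpr hzero
      rw [hg]
      simp only [this, EReal.bot_add]
      exact bot_le
    · push_neg at hzero
      have hbound : ∀ x ∈ {y : X | t ≤ φ y}, c {x} ≤ Real.exp (m - t) := by
        intro x hx
        rw [← myLog_le_coe_iff]
        by_contra h'
        push_neg at h'
        have h1 : ((t : EReal) + ((m - t : ℝ) : EReal)) < (t : EReal) + myLog (c {x}) :=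
          EReal.add_lt_add_left_coe h' t
        have hx' : t ≤ φ x := hx
        have h2 : (t : EReal) + myLog (c {x}) ≤ (φ x : EReal) + myLog (c {x}) :=
          add_le_add_left (EReal.coe_le_coe_iff.mpr hx') _
        have h3 : (φ x : EReal) + myLog (c {x}) ≤ M := le_iSup f x
        rw [← EReal.coe_add] at h1
        have : ((m : ℝ) : EReal) < M := by
          calc ((m : ℝ) : EReal) = ((t + (m - t) : ℝ) : EReal) := by norm_num
            _ < (t : EReal) + myLog (c {x}) := h1
            _ ≤ M := le_trans h2 h3
        rw [hMm] at this
        exact absurd this (lt_irrefl _)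
      have hFle : c {y : X | t ≤ φ y} ≤ Real.exp (m - t) := by
        by_contra h'
        push_neg at h'
        have := stmt15_key hc (hFt_closed t) hzero
          (fun x hx => lt_of_le_of_lt (hbound x hx) h')
        exact absurd this (lt_irrefl _)
      calc g t = myLog (c {y : X | t ≤ φ y}) + (t : EReal) := rfl
        _ ≤ ((m - t : ℝ) : EReal) + (t : EReal) :=
            add_le_add_left ((myLog_le_coe_iff _ _).mpr hFle) _
        _ = (m : EReal) := by rw [← EReal.coe_add]; norm_num
        _ = M := hMm.symm
  have hMg : M = ⨆ t, g t := by
    apply le_antisymm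
    · exact iSup_le fun x => le_trans (hfg x) (le_iSup g (φ x))
    · exact iSup_le hgM
  have hMfx : M = f x₀ := hx₀
  refine ⟨hMg, ⟨x₀, hx₀⟩, ⟨φ x₀, ?_⟩⟩
  rw [← hMg]
  have hle : M ≤ g (φ x₀) := hMfx ▸ hfg x₀
  exact le_antisymm hle (hgM (φ x₀))
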